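/- In the setup below, every wall v ∈ V₁⁻ crosses U_0, and v crosses only finitely many of the walls U_j. -/
import Mathlib


open Set

variable {X : Type*}

/-- A wall: a subset with nonempty complement and nonempty itself. -/
def IsWall (h : Set X) : Prop := h.Nonempty ∧ hᶜ.Nonempty

/-- Walls `h` and `k` cross. -/
def Crosses (h k : Set X) : Prop :=
  (h ∩ k).Nonempty ∧ (h ∩ kᶜ).Nonempty ∧ (hᶜ ∩ k).Nonempty ∧ (hᶜ ∩ kᶜ).Nonempty

/-- The wall `u` lies in the halfspace `H` of the wall `w`. -/
def LiesIn (u H w : Set X) : Prop := u ≠ w ∧ (u ⊆ H ∨ uᶜ ⊆ H)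

/-- The wall `w` separates the walls `u` and `v`. -/
def Separates (w u v : Set X) : Prop :=
  u ≠ v ∧ u ≠ w ∧ v ≠ w ∧
  ∃ u' v' w', (u' = u ∨ u' = uᶜ) ∧ (v' = v ∨ v' = vᶜ) ∧ (w' = w ∨ w' = wᶜ) ∧
    u' ⊆ w' ∧ v' ⊆ w'ᶜ

/-- `S` contains a facing triple. -/
def HasFacingTriple (S : Set (Set X)) : Prop :=
  ∃ a ∈ S, ∃ b ∈ S, ∃ c ∈ S, a ≠ b ∧ a ≠ c ∧ b ≠ c ∧
    ∃ a' b' c', (a' = a ∨ a' = aᶜ) ∧ (b' = b ∨ b' = bᶜ) ∧ (c' = c ∨ c' = cᶜ) ∧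
      Disjoint a' b' ∧ Disjoint a' c' ∧ Disjoint b' c'

/-- `S` is inseparable with respect to the wall collection `W`. -/
def InseparableIn (W S : Set (Set X)) : Prop :=
  ∀ u ∈ S, ∀ v ∈ S, ∀ w ∈ W, Separates w u v → w ∈ S

/-- `S` is unidirectional: for each wall `w ∈ S`, at most one of the two halfspaces of `w`
contains infinitely many walls of `S`. -/
def Unidirectional (S : Set (Set X)) : Prop :=
  ∀ w ∈ S, {u ∈ S | LiesIn u w w}.Finite ∨ {u ∈ S | LiesIn u wᶜ w}.Finite

/-- `V` is a UBS in the wall collection `W`. -/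
def IsUBS (W V : Set (Set X)) : Prop :=
  V ⊆ W ∧ V.Infinite ∧ InseparableIn W V ∧ Unidirectional V ∧ ¬ HasFacingTriple V

/-- Almost-equivalence of sets of walls. -/
def AlmostEq (S T : Set (Set X)) : Prop := (S \ T).Finite ∧ (T \ S).Finite

/-- `U` is a minimal UBS in `W`. -/
def MinUBS (W U : Set (Set X)) : Prop :=
  IsUBS W U ∧ ∀ U', IsUBS W U' → U' ⊆ U → AlmostEq U' U

/-- `A ≺ B`: every wall of `B` crosses all but finitely many walls of `A`. -/
def Prec (A B : Set (Set X)) : Prop := ∀ b ∈ B, {a ∈ A | ¬ Crosses b a}.Finite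

/-- Distinct members of `W` determine distinct partitions. -/
def Admissible (W : Set (Set X)) : Prop := ∀ h ∈ W, ∀ k ∈ W, h ≠ k → h ≠ kᶜ

/-- No infinite subset of `W` consists of pairwise-crossing walls. -/
def NoInfCross (W : Set (Set X)) : Prop := ∀ S ⊆ W, S.Pairwise Crosses → S.Finite

/-- `W` has dimension at most `D`: every pairwise-crossing subset has cardinality at most `D`. -/
def DimLE (W : Set (Set X)) (D : ℕ) : Prop :=
  ∀ S ⊆ W, S.Pairwise Crosses → S.Finite ∧ S.ncard ≤ D

/-- `c` is a chain: an injective sequence of walls with `c n` separating `c (n-1)` and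
`c (n+1)` for `n ≥ 1`. -/
def IsChainSeq (c : ℕ → Set X) : Prop :=
  Function.Injective c ∧ ∀ n, Separates (c (n + 1)) (c n) (c (n + 2))

/-- The chain `c` is inextensible in `S`: no wall of `S` has a halfspace containing every
term of `c`. -/
def InextensibleIn (S : Set (Set X)) (c : ℕ → Set X) : Prop :=
  ¬ ∃ w ∈ S, ∃ H, (H = w ∨ H = wᶜ) ∧ ∀ n, LiesIn (c n) H w

/-- The inseparable closure in `W` of a set `C` of walls. -/
def insepClosure (W C : Set (Set X)) : Set (Set X) :=
  ⋂₀ {S | C ⊆ S ∧ S ⊆ W ∧ InseparableIn W S}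

/-- The sub-collection of `V ∖ U₁` (where `U₁` is the inseparable closure of the chain `c`)
consisting of walls crossing all but finitely many walls of `U₁`. -/
def V1plus (W V : Set (Set X)) (c : ℕ → Set X) : Set (Set X) :=
  {v ∈ V \ insepClosure W (Set.range c) |
    {u ∈ insepClosure W (Set.range c) | ¬ Crosses v u}.Finite}

/-- The complement of `V₁⁺` in `V₁ = V ∖ U₁`. -/
def V1minus (W V : Set (Set X)) (c : ℕ → Set X) : Set (Set X) :=
  (V \ insepClosure W (Set.range c)) \ V1plus W V c

/- Auxiliary lemmas -/

lemma pair_compl {p u : Set X} (h : p = u ∨ p = uᶜ) : pᶜ = u ∨ pᶜ = uᶜ := by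
  rcases h with rfl | rfl
  · exact Or.inr rfl
  · exact Or.inl (compl_compl u)

lemma pair_trans {p s u : Set X} (hp : p = u ∨ p = uᶜ) (hs : s = u ∨ s = uᶜ) :
    p = s ∨ p = sᶜ := by
  rcases hp with rfl | rfl <;> rcases hs with rfl | rfl
  · exact Or.inl rfl
  · exact Or.inr (compl_compl _).symm
  · exact Or.inr rfl
  · exact Or.inl rfl

lemma insepClosure_insep (W C : Set (Set X)) : InseparableIn W (insepClosure W C) :=
  fun u hu u' hu' w hw hsep => Set.mem_sInter.2 fun S hS =>
    hS.2.2 u (Set.mem_sInter.1 hu S hS) u' (Set.mem_sInter.1 hu' S hS) w hw hsep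

lemma subset_insepClosure (W C : Set (Set X)) : C ⊆ insepClosure W C :=
  fun x hx => Set.mem_sInter.2 fun _ hS => hS.1 hx

lemma insepClosure_min {W C S : Set (Set X)} (h1 : C ⊆ S) (h2 : S ⊆ W)
    (h3 : InseparableIn W S) : insepClosure W C ⊆ S :=
  Set.sInter_subset_of_mem ⟨h1, h2, h3⟩

/-- Every wall of `V₁⁻` crosses `U 0` and crosses only finitely many terms of the chain. -/
theorem v1minus_crosses_U0_and_finitely_many (W : Set (Set X))
    (hWc : W.Countable) (hWwall : ∀ h ∈ W, IsWall h)
    (hWadm : Admissible W) (hWnic : NoInfCross W)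
    (V : Set (Set X)) (hV : IsUBS W V)
    (c : ℕ → Set X) (hc : IsChainSeq c) (hcV : ∀ n, c n ∈ V)
    (hinext : InextensibleIn V c)
    (hU1min : MinUBS W (insepClosure W (Set.range c)))
    (hU1V : insepClosure W (Set.range c) ⊆ V) :
    ∀ v ∈ V1minus W V c, Crosses v (c 0) ∧ {j : ℕ | Crosses v (c j)}.Finite := by
  classical
  -- elementary set-theoretic helpers
  have hemp : ∀ {s t : Set X}, ¬ (s ∩ t).Nonempty → s ⊆ tᶜ :=
    fun hn x hx hxt => hn ⟨x, hx, hxt⟩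
  have hemp' : ∀ {s t : Set X}, ¬ (s ∩ tᶜ).Nonempty → s ⊆ t :=
    fun hn x hx => by_contra fun h' => hn ⟨x, hx, h'⟩
  have hemp'' : ∀ {s t : Set X}, ¬ (sᶜ ∩ t).Nonempty → t ⊆ s :=
    fun hn x hx => by_contra fun h' => hn ⟨x, h', hx⟩
  have hcc2 : ∀ {s t : Set X}, s ⊆ t → tᶜ ⊆ sᶜ := fun h x hx hxs => hx (h hxs)
  have hcc3 : ∀ {s t : Set X}, sᶜ ⊆ tᶜ → t ⊆ s :=
    fun h x hx => by_contra fun hxs => h hxs hx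
  -- the chain walls
  have hVW : V ⊆ W := hV.1
  have hcW : ∀ n, c n ∈ W := fun n => hVW (hcV n)
  have hwall : ∀ n, (c n).Nonempty ∧ (c n)ᶜ.Nonempty := fun n => hWwall _ (hcW n)
  -- basic facts about U₁
  have hrange : ∀ n, c n ∈ insepClosure W (Set.range c) :=
    fun n => subset_insepClosure W _ ⟨n, rfl⟩
  have hU1W : insepClosure W (Set.range c) ⊆ W := by
    refine insepClosure_min ?_ subset_rfl (fun _ _ _ _ w hw _ => hw)
    rintro x ⟨n, rfl⟩
    exact hcW n
  have hU1insep : InseparableIn W (insepClosure W (Set.range c)) := insepClosure_insep W _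
  -- extract the halfspaces given by the separation conditions of the chain
  obtain ⟨A, B, R, hA, hB, hR, hAR, hBR⟩ :
      ∃ A B R : ℕ → Set X, (∀ n, A n = c n ∨ A n = (c n)ᶜ) ∧
        (∀ n, B n = c (n+2) ∨ B n = (c (n+2))ᶜ) ∧
        (∀ n, R n = c (n+1) ∨ R n = (c (n+1))ᶜ) ∧
        (∀ n, A n ⊆ R n) ∧ (∀ n, B n ⊆ (R n)ᶜ) := by
    choose A B R hA hB hR h1 h2 using fun n => (hc.2 n).2.2.2
    exact ⟨A, B, R, hA, hB, hR, h1, h2⟩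
  -- the nested sequence of halfspaces
  obtain ⟨h, hh0, hhs⟩ : ∃ h : ℕ → Set X, h 0 = (A 0)ᶜ ∧ ∀ k, h (k+1) = (R k)ᶜ :=
    ⟨fun n => Nat.rec (motive := fun _ => Set X) ((A 0)ᶜ) (fun k _ => (R k)ᶜ) n,
      rfl, fun _ => rfl⟩
  have hhc : ∀ n, h n = c n ∨ h n = (c n)ᶜ := by
    intro n
    cases n with
    | zero => rw [hh0]; exact pair_compl (hA 0)
    | succ k => rw [hhs k]; exact pair_compl (hR k)
  have hne : ∀ n, (h n).Nonempty := by
    intro n; rcases hhc n with e | e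
    · rw [e]; exact (hwall n).1
    · rw [e]; exact (hwall n).2
  have hnec : ∀ n, ((h n)ᶜ).Nonempty := by
    intro n; rcases hhc n with e | e
    · rw [e]; exact (hwall n).2
    · rw [e, compl_compl]; exact (hwall n).1
  have hdistinct : ∀ m n : ℕ, m ≠ n → ∀ s t : Set X,
      (s = c m ∨ s = (c m)ᶜ) → (t = c n ∨ t = (c n)ᶜ) → s ≠ t := by
    intro m n hmn s t hs ht he
    rcases hs with rfl | rfl <;> rcases ht with rfl | rfl
    · exact hmn (hc.1 he)
    · exact hWadm (c m) (hcW m) (c n) (hcW n) (fun e => hmn (hc.1 e)) he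
    · exact hWadm (c n) (hcW n) (c m) (hcW m) (fun e => hmn (hc.1 e.symm)) he.symm
    · exact hmn (hc.1 (compl_injective he))
  have hstep : ∀ n, h (n+2) ⊆ h (n+1) := by
    intro n
    have hkey : B n = (R (n+1))ᶜ := by
      rcases pair_trans (hB n) (hR (n+1)) with e | e
      · exfalso
        have hAn : A (n+1) ⊆ (R n)ᶜ := by
          have h1 := hAR (n+1)
          rw [← e] at h1
          exact h1.trans (hBR n)
        rcases pair_trans (hA (n+1)) (hR n) with e' | e'
        · obtain ⟨x, hx⟩ : (R n).Nonempty := by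
            rcases hR n with e'' | e''
            · rw [e'']; exact (hwall (n+1)).1
            · rw [e'']; exact (hwall (n+1)).2
          exact hAn (e'.symm ▸ hx) hx
        · have e1 : R (n+1) ⊆ (R n)ᶜ := by rw [← e]; exact hBR n
          have e2 : (R n)ᶜ ⊆ R (n+1) := by rw [← e']; exact hAR (n+1)
          exact hdistinct (n+2) (n+1) (by omega) (R (n+1)) ((R n)ᶜ)
            (hR (n+1)) (pair_compl (hR n)) (e1.antisymm e2)
      · exact e
    rw [hhs (n+1), hhs n, ← hkey]
    exact hBR n
  have hmono : ∀ {m n : ℕ}, m ≤ n → h n ⊆ h m := by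
    have hanti : Antitone h := by
      refine antitone_nat_of_succ_le ?_
      intro n
      cases n with
      | zero => rw [hh0, hhs 0]; exact hcc2 (hAR 0)
      | succ k => exact hstep k
    exact fun {m n} hmn => hanti hmn
  have hcover : ∀ m n : ℕ, ¬ ((h m)ᶜ ⊆ h n) := by
    intro m n hsub
    rcases le_total m n with hle | hle
    · obtain ⟨x, hx⟩ := hnec m
      exact hx (hmono hle (hsub hx))
    · obtain ⟨x, hx⟩ := hnec n
      by_cases hxm : x ∈ h m
      · exact hx (hmono hle hxm)
      · exact hx (hsub hxm)
  -- now fix v ∈ V₁⁻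
  intro v hv
  have hvV : v ∈ V := hv.1.1
  have hvnU : v ∉ insepClosure W (Set.range c) := hv.1.2
  have hT : ¬ ({u ∈ insepClosure W (Set.range c) | ¬ Crosses v u}.Finite) :=
    fun hf => hv.2 ⟨hv.1, hf⟩
  have hvW : v ∈ W := hVW hvV
  have hvwall : IsWall v := hWwall v hvW
  have hvnc : ∀ n, c n ≠ v := fun n e => hvnU (e ▸ hrange n)
  have hlies : ∀ H : Set X, (∀ n, h n ⊆ H) → ∀ n, LiesIn (c n) H v := by
    intro H hH n
    refine ⟨hvnc n, ?_⟩
    rcases hhc n with e | e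
    · exact Or.inl (e ▸ hH n)
    · exact Or.inr (e ▸ hH n)
  have hlies' : ∀ H : Set X, (∀ n, (h n)ᶜ ⊆ H) → ∀ n, LiesIn (c n) H v := by
    intro H hH n
    refine ⟨hvnc n, ?_⟩
    rcases hhc n with e | e
    · exact Or.inr (e ▸ hH n)
    · refine Or.inl ?_
      have h1 := hH n
      rw [e, compl_compl] at h1
      exact h1
  -- crossing the chain, in terms of the halfspaces h
  have hNiff : ∀ n, Crosses v (c n) ↔
      ((v ∩ h n).Nonempty ∧ (v ∩ (h n)ᶜ).Nonempty ∧ (vᶜ ∩ h n).Nonempty ∧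
        (vᶜ ∩ (h n)ᶜ).Nonempty) := by
    intro n
    rcases hhc n with e | e
    · rw [e]; exact Iff.rfl
    · rw [e]; unfold Crosses; simp only [compl_compl]; tauto
  have hnc4 : ∀ {u s : Set X}, (s = u ∨ s = uᶜ) → ¬ Crosses v u →
      ¬ ((v ∩ s).Nonempty ∧ (v ∩ sᶜ).Nonempty ∧ (vᶜ ∩ s).Nonempty ∧
        (vᶜ ∩ sᶜ).Nonempty) := by
    rintro u s (rfl | rfl) hncr h4
    · exact hncr h4
    · rw [compl_compl] at h4
      exact hncr ⟨h4.2.1, h4.1, h4.2.2.2, h4.2.2.1⟩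
  -- every wall of U₁ has a halfspace squeezed between two chain halfspaces
  have hsq : ∀ u ∈ insepClosure W (Set.range c),
      u ∈ W ∧ ∃ s, (s = u ∨ s = uᶜ) ∧ ∃ m n, h m ⊆ s ∧ s ⊆ h n := by
    have hE : insepClosure W (Set.range c) ⊆
        {u | u ∈ W ∧ ∃ s, (s = u ∨ s = uᶜ) ∧ ∃ m n, h m ⊆ s ∧ s ⊆ h n} := by
      refine insepClosure_min ?_ (fun x hx => hx.1) ?_
      · rintro x ⟨k, rfl⟩
        exact ⟨hcW k, h k, hhc k, k, k, subset_rfl, subset_rfl⟩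
      · rintro u hu u' hu' w hw ⟨-, -, -, p, q, r, hp, hq, hr, hpr, hqr⟩
        obtain ⟨-, s, hs, m, n, hms, hsn⟩ := hu
        obtain ⟨-, s', hs', m', n', hms', hsn'⟩ := hu'
        have hA1 : h m ⊆ r ∨ (h n)ᶜ ⊆ r := by
          rcases pair_trans hp hs with e | e
          · rw [e] at hpr; exact Or.inl (hms.trans hpr)
          · rw [e] at hpr; exact Or.inr ((hcc2 hsn).trans hpr)
        have hB1 : h m' ⊆ rᶜ ∨ (h n')ᶜ ⊆ rᶜ := by
          rcases pair_trans hq hs' with e | e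
          · rw [e] at hqr; exact Or.inl (hms'.trans hqr)
          · rw [e] at hqr; exact Or.inr ((hcc2 hsn').trans hqr)
        rcases hA1 with hA1 | hA1 <;> rcases hB1 with hB1 | hB1
        · exfalso
          obtain ⟨x, hx⟩ := hne (max m m')
          exact hB1 (hmono (le_max_right m m') hx) (hA1 (hmono (le_max_left m m') hx))
        · exact ⟨hw, r, hr, m, n', hA1, hcc3 hB1⟩
        · refine ⟨hw, rᶜ, pair_compl hr, m', n, hB1, ?_⟩
          intro x hx
          by_contra hxn
          exact hx (hA1 hxn)
        · exact absurd (hA1.trans (hcc3 hB1)) (hcover n n')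
    exact fun u hu => hE hu
  -- Claim (ii): v crosses only finitely many chain walls
  have hfin : {j : ℕ | Crosses v (c j)}.Finite := by
    by_contra hnfin
    have hinf : {j : ℕ | Crosses v (c j)}.Infinite := hnfin
    obtain ⟨j₀, hj₀⟩ := hinf.nonempty
    have htail : ∀ K, j₀ ≤ K →
        ((v ∩ h K).Nonempty ∧ (v ∩ (h K)ᶜ).Nonempty ∧ (vᶜ ∩ h K).Nonempty ∧
          (vᶜ ∩ (h K)ᶜ).Nonempty) := by
      intro K hK
      obtain ⟨j, hj, hKj⟩ : ∃ j, Crosses v (c j) ∧ K ≤ j := by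
        by_contra hcon
        push_neg at hcon
        exact hnfin (Set.Finite.subset (Set.finite_Iio K) (fun j hj => hcon j hj))
      have hcj₀ := (hNiff j₀).1 hj₀
      have hcj := (hNiff j).1 hj
      obtain ⟨x1, hx1v, hx1⟩ := hcj.1
      obtain ⟨x2, hx2v, hx2⟩ := hcj₀.2.1
      obtain ⟨x3, hx3v, hx3⟩ := hcj.2.2.1
      obtain ⟨x4, hx4v, hx4⟩ := hcj₀.2.2.2
      exact ⟨⟨x1, hx1v, hmono hKj hx1⟩, ⟨x2, hx2v, fun hx => hx2 (hmono hK hx)⟩,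
        ⟨x3, hx3v, hmono hKj hx3⟩, ⟨x4, hx4v, fun hx => hx4 (hmono hK hx)⟩⟩
    have hTinf : {u ∈ insepClosure W (Set.range c) | ¬ Crosses v u}.Infinite := hT
    set T' := {u ∈ insepClosure W (Set.range c) | ¬ Crosses v u} \ Set.range c with hT'def
    have hT'inf : T'.Infinite := by
      have h1 : ({u ∈ insepClosure W (Set.range c) | ¬ Crosses v u} \
          (c '' Set.Iio j₀)).Infinite :=
        hTinf.diff ((Set.finite_Iio j₀).image c)
      refine h1.mono ?_
      rintro u ⟨⟨huU, hncr⟩, hnim⟩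
      refine ⟨⟨huU, hncr⟩, ?_⟩
      rintro ⟨j, rfl⟩
      rcases lt_or_ge j j₀ with hj | hj
      · exact hnim ⟨j, hj, rfl⟩
      · exact hncr ((hNiff j).2 (htail j hj))
    have horient : ∀ u ∈ T',
        ∃ s v', (s = u ∨ s = uᶜ) ∧ (v' = v ∨ v' = vᶜ) ∧ v' ⊆ s ∧ s ⊆ h 0 := by
      rintro u ⟨⟨huU, hncr⟩, hnr⟩
      obtain ⟨huW, s, hs, m, n, hms, hsn⟩ := hsq u huU
      have h4 := hnc4 hs hncr
      have hs0 : s ⊆ h 0 := hsn.trans (hmono (Nat.zero_le n))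
      by_cases e2 : (v ∩ sᶜ).Nonempty
      · by_cases e4 : (vᶜ ∩ sᶜ).Nonempty
        · by_cases e1 : (v ∩ s).Nonempty
          · by_cases e3 : (vᶜ ∩ s).Nonempty
            · exact absurd ⟨e1, e2, e3, e4⟩ h4
            · exfalso
              obtain ⟨x, hxv, hxh⟩ := (htail (max m j₀) (le_max_right m j₀)).2.2.1
              exact hxv (hemp'' e3 (hms (hmono (le_max_left m j₀) hxh)))
          · exfalso
            obtain ⟨x, hxv, hxh⟩ := (htail (max m j₀) (le_max_right m j₀)).1
            exact hemp e1 hxv (hms (hmono (le_max_left m j₀) hxh))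
        · exact ⟨s, vᶜ, hs, Or.inr rfl, hemp' e4, hs0⟩
      · exact ⟨s, v, hs, Or.inl rfl, hemp' e2, hs0⟩
    obtain ⟨u₀, hu₀T⟩ := hT'inf.nonempty
    obtain ⟨s₀, v₀, hs₀, hv₀, hv₀s₀, hs₀0⟩ := horient u₀ hu₀T
    have hFinsep : InseparableIn W
        {w | w ∈ W ∧ ∃ s, (s = w ∨ s = wᶜ) ∧ v₀ ⊆ s ∧ s ⊆ h 0} := by
      rintro u hu u' hu' w hw ⟨-, -, -, p, q, r, hp, hq, hr, hpr, hqr⟩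
      obtain ⟨-, s, hs, hv₀s, hsh⟩ := hu
      obtain ⟨-, s', hs', hv₀s', hs'h⟩ := hu'
      have hv₀ne : v₀.Nonempty := by
        rcases hv₀ with rfl | rfl
        · exact hvwall.1
        · exact hvwall.2
      have hA1 : v₀ ⊆ r ∨ (h 0)ᶜ ⊆ r := by
        rcases pair_trans hp hs with e | e
        · rw [e] at hpr; exact Or.inl (hv₀s.trans hpr)
        · rw [e] at hpr; exact Or.inr ((hcc2 hsh).trans hpr)
      have hB1 : v₀ ⊆ rᶜ ∨ (h 0)ᶜ ⊆ rᶜ := by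
        rcases pair_trans hq hs' with e | e
        · rw [e] at hqr; exact Or.inl (hv₀s'.trans hqr)
        · rw [e] at hqr; exact Or.inr ((hcc2 hs'h).trans hqr)
      rcases hA1 with hA1 | hA1 <;> rcases hB1 with hB1 | hB1
      · obtain ⟨x, hx⟩ := hv₀ne
        exact absurd (hA1 hx) (hB1 hx)
      · exact ⟨hw, r, hr, hA1, hcc3 hB1⟩
      · refine ⟨hw, rᶜ, pair_compl hr, hB1, ?_⟩
        intro x hx
        by_contra hxn
        exact hx (hA1 hxn)
      · obtain ⟨x, hx⟩ := hnec 0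
        exact absurd (hA1 hx) (hB1 hx)
    have hT'F : T' ⊆ {w | w ∈ W ∧ ∃ s, (s = w ∨ s = wᶜ) ∧ v₀ ⊆ s ∧ s ⊆ h 0} := by
      intro u huT
      obtain ⟨s, v', hs, hv', hv's, hsh⟩ := horient u huT
      have huW : u ∈ W := hU1W huT.1.1
      rcases pair_trans hv' hv₀ with e | e
      · rw [e] at hv's
        exact ⟨huW, s, hs, hv's, hsh⟩
      · exfalso
        obtain ⟨x, hx⟩ := hnec 0
        apply hx
        by_cases hxv : x ∈ v₀
        · exact hs₀0 (hv₀s₀ hxv)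
        · rw [e] at hv's
          exact hsh (hv's hxv)
    have hGF : insepClosure W T' ⊆
        {w | w ∈ W ∧ ∃ s, (s = w ∨ s = wᶜ) ∧ v₀ ⊆ s ∧ s ⊆ h 0} :=
      insepClosure_min hT'F (fun x hx => hx.1) hFinsep
    have hGU1 : insepClosure W T' ⊆ insepClosure W (Set.range c) :=
      insepClosure_min (fun u hu => hu.1.1) hU1W hU1insep
    have hT'G : T' ⊆ insepClosure W T' := subset_insepClosure W T'
    have hU1UBS : IsUBS W (insepClosure W (Set.range c)) := hU1min.1
    have hGUBS : IsUBS W (insepClosure W T') := by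
      refine ⟨hGU1.trans hU1W, hT'inf.mono hT'G, insepClosure_insep W T', ?_, ?_⟩
      · intro w hwG
        rcases hU1UBS.2.2.2.1 w (hGU1 hwG) with hf | hf
        · exact Or.inl (hf.subset (fun x hx => ⟨hGU1 hx.1, hx.2⟩))
        · exact Or.inr (hf.subset (fun x hx => ⟨hGU1 hx.1, hx.2⟩))
      · rintro ⟨w1, hw1, w2, hw2, w3, hw3, rest⟩
        exact hU1UBS.2.2.2.2 ⟨w1, hGU1 hw1, w2, hGU1 hw2, w3, hGU1 hw3, rest⟩
    have halmost := hU1min.2 (insepClosure W T') hGUBS hGU1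
    have hcK : ∀ K, j₀ ≤ K →
        c K ∈ insepClosure W (Set.range c) \ insepClosure W T' := by
      intro K hK
      refine ⟨hrange K, fun hKG => ?_⟩
      obtain ⟨-, s, hsor, hv₀s, hs0⟩ := hGF hKG
      rcases pair_trans hsor (hhc K) with e | e
      · rw [e] at hv₀s
        rcases hv₀ with rfl | rfl
        · obtain ⟨x, hxv, hxh⟩ := (htail K hK).2.1
          exact hxh (hv₀s hxv)
        · obtain ⟨x, hxv, hxh⟩ := (htail K hK).2.2.2
          exact hxh (hv₀s hxv)
      · rw [e] at hs0
        exact hcover K 0 hs0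
    have himg : (insepClosure W (Set.range c) \ insepClosure W T').Infinite := by
      have h1 : (Set.Ici j₀).Infinite := by
        refine ((Set.infinite_univ (α := ℕ)).diff (Set.finite_Iio j₀)).mono ?_
        rintro x ⟨-, hx⟩
        exact Set.mem_Ici.mpr (not_lt.1 fun hlt => hx (Set.mem_Iio.mpr hlt))
      have h2 : (c '' Set.Ici j₀).Infinite := h1.image (hc.1.injOn)
      refine h2.mono ?_
      rintro x ⟨K, hK, rfl⟩
      exact hcK K hK
    exact himg halmost.2
  -- Claim (i): v crosses c 0
  have hcr0 : Crosses v (c 0) := by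
    by_contra hnc0
    have h4 := hnc4 (hhc 0) hnc0
    have hmain : ∀ v₀ : Set X, (v₀ = v ∨ v₀ = vᶜ) → v₀ ⊆ h 0 → False := by
      intro v₀ hv₀ hv₀0
      have hex : ∃ k, ¬ v₀ ⊆ h k := by
        by_contra hall
        push_neg at hall
        exact hinext ⟨v, hvV, v₀ᶜ, pair_compl hv₀, hlies' v₀ᶜ (fun n => hcc2 (hall n))⟩
      have ha' : ¬ v₀ ⊆ h (Nat.find hex) := Nat.find_spec hex
      have ha'pos : 0 < Nat.find hex :=
        Nat.pos_of_ne_zero (fun e => ha' (by rw [e]; exact hv₀0))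
      have ha : v₀ ⊆ h (Nat.find hex - 1) :=
        of_not_not (Nat.find_min hex (by omega))
      have hnot : ∀ k, Nat.find hex - 1 < k → ¬ v₀ ⊆ h k := by
        intro k hk hsub
        exact ha' (hsub.trans (hmono (by omega)))
      obtain ⟨k₀, hak₀, hnck₀⟩ :
          ∃ k₀, Nat.find hex - 1 < k₀ ∧ ¬ Crosses v (c k₀) := by
        by_contra hcon
        push_neg at hcon
        have hcov : Set.univ ⊆ Set.Iic (Nat.find hex - 1) ∪ {j : ℕ | Crosses v (c j)} := by
          intro j _
          rcases le_or_gt j (Nat.find hex - 1) with hj | hj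
          · exact Or.inl hj
          · exact Or.inr (hcon j hj)
        exact Set.infinite_univ
          (Set.Finite.subset ((Set.finite_Iic _).union hfin) hcov)
      have hsubcase1 : ∀ v'' : Set X, (v'' = v ∨ v'' = vᶜ) → v'' ⊆ h k₀ → False := by
        intro v'' hv'' hsub
        rcases pair_trans hv'' hv₀ with e | e
        · rw [e] at hsub
          exact hnot k₀ hak₀ hsub
        · obtain ⟨x, hx⟩ := hnec (Nat.find hex - 1)
          apply hx
          by_cases hxv : x ∈ v₀
          · exact ha hxv
          · rw [e] at hsub
            exact hmono (le_of_lt hak₀) (hsub hxv)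
      have hsubcase2 : ∀ v'' : Set X, (v'' = v ∨ v'' = vᶜ) → h k₀ ⊆ v'' → False := by
        intro v'' hv'' hsub
        rcases pair_trans hv'' hv₀ with e | e
        · rw [e] at hsub
          refine hvnU (hU1insep (c k₀) (hrange k₀) (c (Nat.find hex - 1))
            (hrange _) v hvW ?_)
          exact ⟨hc.1.ne (by omega), hvnc k₀, hvnc _, h k₀, (h (Nat.find hex - 1))ᶜ, v₀,
            hhc k₀, pair_compl (hhc _), hv₀, hsub, hcc2 ha⟩
        · rw [e] at hsub
          refine hV.2.2.2.2 ⟨v, hvV, c (Nat.find hex - 1), hcV _, c k₀, hcV k₀,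
            (hvnc _).symm, (hvnc k₀).symm, hc.1.ne (by omega), v₀,
            (h (Nat.find hex - 1))ᶜ, h k₀,
            hv₀, pair_compl (hhc _), hhc k₀, ?_, ?_, ?_⟩
          · exact Set.disjoint_left.mpr (fun x hx hxc => hxc (ha hx))
          · exact Set.disjoint_left.mpr (fun x hx hxk => hsub hxk hx)
          · exact Set.disjoint_left.mpr (fun x hxc hxk => hxc (hmono (le_of_lt hak₀) hxk))
      have h4' := hnc4 (hhc k₀) hnck₀
      by_cases e1 : (v ∩ h k₀).Nonempty
      · by_cases e2 : (v ∩ (h k₀)ᶜ).Nonempty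
        · by_cases e3 : (vᶜ ∩ h k₀).Nonempty
          · by_cases e4 : (vᶜ ∩ (h k₀)ᶜ).Nonempty
            · exact h4' ⟨e1, e2, e3, e4⟩
            · exact hsubcase1 vᶜ (Or.inr rfl) (hemp' e4)
          · exact hsubcase2 v (Or.inl rfl) (hemp'' e3)
        · exact hsubcase1 v (Or.inl rfl) (hemp' e2)
      · exact hsubcase2 vᶜ (Or.inr rfl) (fun x hxk hxv => hemp e1 hxv hxk)
    by_cases e1 : (v ∩ h 0).Nonempty
    · by_cases e2 : (v ∩ (h 0)ᶜ).Nonempty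
      · by_cases e3 : (vᶜ ∩ h 0).Nonempty
        · by_cases e4 : (vᶜ ∩ (h 0)ᶜ).Nonempty
          · exact h4 ⟨e1, e2, e3, e4⟩
          · exact hmain vᶜ (Or.inr rfl) (hemp' e4)
        · exact hinext ⟨v, hvV, v, Or.inl rfl,
            hlies v (fun n => (hmono (Nat.zero_le n)).trans (hemp'' e3))⟩
      · exact hmain v (Or.inl rfl) (hemp' e2)
    · exact hinext ⟨v, hvV, vᶜ, Or.inr rfl,
        hlies vᶜ (fun n => (hmono (Nat.zero_le n)).trans (fun x hx hxv => hemp e1 hxv hx))⟩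
  exact ⟨hcr0, hfin⟩
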